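/- arXiv:1405.5800 — 2 statements merged into one kernel-verified Lean document; each statement's English description precedes it below -/
import Mathlib

section
/- Let G be a finite abelian group, B ⊆ G nonempty, ε ∈ [0,1] and η ∈ [0,1]. Let f: G → ℂ be supported on B and not identically zero, and let ω: Ĝ → ℝ_{≥0} be supported on Δ_η(f). Then for every integer m ≥ 1, E_{2m}(ω, Δ_ε(B)) ≥ ‖ω‖₁^{2m} · ( (η · ‖f‖₁ / (‖f‖_{2m/(2m−1)} · |B|^{1/(2m)}))^{2m} − ε ). -/
open scoped BigOperators

/-- The Fourier transform `f̂(γ) = ∑_x f(x)γ(x)`. -/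
noncomputable def dft {G : Type*} [AddCommGroup G] [Fintype G]
    (f : G → ℂ) (γ : AddChar G ℂ) : ℂ := ∑ x, f x * γ x

/-- The `η`-large spectrum of `f`: characters `γ` with `|f̂(γ)| ≥ η‖f‖₁`. -/
noncomputable def spec {G : Type*} [AddCommGroup G] [Fintype G]
    (f : G → ℂ) (η : ℝ) : Set (AddChar G ℂ) :=
  {γ | η * ∑ x, ‖f x‖ ≤ ‖dft f γ‖}

/-- The `ε`-large spectrum of (the indicator of) a set `B`. -/
noncomputable def specSet {G : Type*} [AddCommGroup G] (B : Finset G) (ε : ℝ) :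
    Set (AddChar G ℂ) :=
  {γ | ε * B.card ≤ ‖∑ x ∈ B, γ x‖}

/-- The additive energy `E_{2m}(ω,Γ)` on the dual group (written multiplicatively):
`∑ ω(γ₁)⋯ω(γ_m')·1_Γ(γ₁ + ⋯ + γ_m − γ₁' − ⋯ − γ_m')`. -/
noncomputable def energy {G : Type*} [AddCommGroup G] [Fintype G]
    [Fintype (AddChar G ℂ)] (ω : AddChar G ℂ → ℝ) (Γ : Set (AddChar G ℂ)) (m : ℕ) : ℝ :=
  ∑ γ : Fin m → AddChar G ℂ, ∑ γ' : Fin m → AddChar G ℂ,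
    (∏ i, ω (γ i)) * (∏ i, ω (γ' i)) * Γ.indicator 1 ((∏ i, γ i) / ∏ i, γ' i)

/-- Auxiliary: splitting a product of character values. -/
lemma prod_char_eq {G : Type*} [AddCommGroup G] [Fintype G] {m : ℕ}
    (A Bc : Fin m → ℂ) (v w : Fin m → AddChar G ℂ) (x : G) :
    (∏ i, A i * (v i) x) * ∏ i, Bc i * (starRingEnd ℂ) ((w i) x)
      = ((∏ i, A i) * ∏ i, Bc i) * ((∏ i, v i) / ∏ i, w i) x := by
  rw [Finset.prod_mul_distrib, Finset.prod_mul_distrib, AddChar.div_apply',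
    AddChar.prod_apply, AddChar.prod_apply]
  simp only [← AddChar.inv_apply_eq_conj]
  rw [Finset.prod_inv_distrib, div_eq_mul_inv]
  ring

/-- **Lower bound for the additive energy of a large spectrum** (relative version of
Shkredov's bound). -/
theorem energy_spectrum_lower {G : Type*} [AddCommGroup G] [Fintype G]
    [Fintype (AddChar G ℂ)] (B : Finset G) (hB : B.Nonempty) (ε η : ℝ)
    (hε0 : 0 ≤ ε) (hε1 : ε ≤ 1) (hη0 : 0 ≤ η) (hη1 : η ≤ 1)
    (f : G → ℂ) (hfB : ∀ x, f x ≠ 0 → x ∈ B) (hfne : f ≠ 0)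
    (ω : AddChar G ℂ → ℝ) (hω0 : ∀ γ, 0 ≤ ω γ) (hωsupp : ∀ γ, ω γ ≠ 0 → γ ∈ spec f η)
    (m : ℕ) (hm : 1 ≤ m) :
    (∑ γ, ω γ) ^ (2 * m) *
        ((η * (∑ x, ‖f x‖) /
            ((∑ x, ‖f x‖ ^ ((2 * m : ℝ) / (2 * m - 1))) ^
                ((2 * m - 1 : ℝ) / (2 * m)) *
              (B.card : ℝ) ^ ((1 : ℝ) / (2 * m)))) ^ (2 * m) - ε) ≤
      energy ω (specSet B ε) m := by
  classical
  have hBc : (0:ℝ) < B.card := by exact_mod_cast hB.card_pos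
  have hm' : (1:ℝ) ≤ (m:ℝ) := by exact_mod_cast hm
  have hMpos : (0:ℝ) < 2 * (m:ℝ) := by linarith
  have hM1 : (0:ℝ) < 2 * (m:ℝ) - 1 := by linarith
  set W : ℝ := ∑ γ, ω γ with hW
  have hWnn : 0 ≤ W := Finset.sum_nonneg fun γ _ => hω0 γ
  set L1 : ℝ := ∑ x, ‖f x‖ with hL1
  have hfx : ∃ x, f x ≠ 0 := by
    by_contra h
    push_neg at h
    exact hfne (funext fun x => h x)
  obtain ⟨x₀, hx₀⟩ := hfx
  have hL1pos : 0 < L1 := by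
    refine Finset.sum_pos' (fun x _ => norm_nonneg _) ⟨x₀, Finset.mem_univ _, ?_⟩
    exact norm_pos_iff.mpr hx₀
  set p' : ℝ := (2 * (m:ℝ)) / (2 * (m:ℝ) - 1) with hp'
  have hpq : p'.HolderConjugate (2 * (m:ℝ)) := by
    have h1 : (1:ℝ) < 2 * (m:ℝ) := by linarith
    exact (by simpa [Real.conjExponent] using Real.HolderConjugate.conjExponent h1 :
      (2 * (m:ℝ)).HolderConjugate p').symm
  set Sp : ℝ := ∑ x, ‖f x‖ ^ p' with hSp
  have hSpos : 0 < Sp := by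
    refine Finset.sum_pos' (fun x _ => Real.rpow_nonneg (norm_nonneg _) _)
      ⟨x₀, Finset.mem_univ _, Real.rpow_pos_of_pos (norm_pos_iff.mpr hx₀) _⟩
  set Lp : ℝ := Sp ^ ((2 * (m:ℝ) - 1) / (2 * (m:ℝ))) with hLp
  have hLppos : 0 < Lp := Real.rpow_pos_of_pos hSpos _
  have hE : 0 ≤ energy ω (specSet B ε) m := by
    refine Finset.sum_nonneg fun v _ => Finset.sum_nonneg fun w _ => ?_
    exact mul_nonneg
      (mul_nonneg (Finset.prod_nonneg fun i _ => hω0 _) (Finset.prod_nonneg fun i _ => hω0 _))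
      (Set.indicator_nonneg (fun _ _ => zero_le_one) _)
  -- the unimodular phases
  set c : AddChar G ℂ → ℂ := fun γ =>
    if dft f γ = 0 then 0 else (starRingEnd ℂ) (dft f γ) / (‖dft f γ‖ : ℂ) with hc
  have hcabs : ∀ γ, ‖c γ‖ ≤ 1 := by
    intro γ
    by_cases h : dft f γ = 0
    · simp [hc, h]
    · have h0 : ‖dft f γ‖ ≠ 0 := norm_ne_zero_iff.mpr h
      simp only [hc, if_neg h]
      rw [norm_div, Complex.norm_conj, Complex.norm_real, Real.norm_eq_abs,
        abs_of_nonneg (norm_nonneg _), div_self h0]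
  have hcmul : ∀ γ, c γ * dft f γ = (‖dft f γ‖ : ℂ) := by
    intro γ
    by_cases h : dft f γ = 0
    · simp [hc, h]
    · have h0 : (‖dft f γ‖ : ℂ) ≠ 0 := by
        exact_mod_cast norm_ne_zero_iff.mpr h
      simp only [hc, if_neg h]
      rw [div_mul_eq_mul_div, mul_comm, Complex.mul_conj, Complex.normSq_eq_norm_sq,
        Complex.ofReal_pow, sq, mul_div_assoc, div_self h0, mul_one]
  set a : AddChar G ℂ → ℂ := fun γ => (ω γ : ℂ) * c γ with ha
  have haabs : ∀ γ, ‖a γ‖ ≤ ω γ := by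
    intro γ
    rw [ha]
    simp only
    rw [norm_mul, Complex.norm_real, Real.norm_eq_abs, abs_of_nonneg (hω0 γ)]
    exact mul_le_of_le_one_right (hω0 γ) (hcabs γ)
  set g : G → ℂ := fun x => ∑ γ, a γ * γ x with hg
  set σ : ℝ := ∑ γ, ω γ * ‖dft f γ‖ with hσ
  have hσnn : 0 ≤ σ :=
    Finset.sum_nonneg fun γ _ => mul_nonneg (hω0 γ) (norm_nonneg _)
  have step1 : η * L1 * W ≤ σ := by
    rw [hW, hσ, Finset.mul_sum]
    refine Finset.sum_le_sum fun γ _ => ?_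
    by_cases h : ω γ = 0
    · simp [h]
    · have hγ : η * L1 ≤ ‖dft f γ‖ := by
        have := hωsupp γ h
        simpa [spec, Set.mem_setOf_eq, ← hL1] using this
      calc η * L1 * ω γ ≤ ‖dft f γ‖ * ω γ :=
            mul_le_mul_of_nonneg_right hγ (hω0 γ)
        _ = ω γ * ‖dft f γ‖ := mul_comm _ _
  have key : (σ : ℂ) = ∑ x, f x * g x := by
    have e1 : ∑ x, f x * g x = ∑ γ, a γ * dft f γ := by
      simp_rw [hg, dft, Finset.mul_sum]
      rw [Finset.sum_comm]
      refine Finset.sum_congr rfl fun γ _ => ?_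
      refine Finset.sum_congr rfl fun x _ => by ring
    rw [e1]
    rw [hσ, Complex.ofReal_sum]
    refine Finset.sum_congr rfl fun γ _ => ?_
    rw [Complex.ofReal_mul]
    simp only [ha]
    rw [mul_assoc, hcmul γ]
  have step2 : σ ≤ ∑ x, ‖f x‖ * ‖g x‖ := by
    calc σ = ‖(σ : ℂ)‖ := by
          rw [Complex.norm_real, Real.norm_eq_abs, abs_of_nonneg hσnn]
      _ = ‖∑ x, f x * g x‖ := by rw [key]
      _ ≤ ∑ x, ‖f x * g x‖ := norm_sum_le _ _
      _ = ∑ x, ‖f x‖ * ‖g x‖ := by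
          refine Finset.sum_congr rfl fun x _ => norm_mul _ _
  have step3 : ∑ x, ‖f x‖ * ‖g x‖
      = ∑ x ∈ B, ‖f x‖ * ‖g x‖ := by
    refine (Finset.sum_subset (Finset.subset_univ B) fun x _ hx => ?_).symm
    have : f x = 0 := by
      by_contra h
      exact hx (hfB x h)
    simp [this]
  have holder : ∑ x ∈ B, ‖f x‖ * ‖g x‖ ≤
      (∑ x ∈ B, ‖f x‖ ^ p') ^ (1/p') *
        (∑ x ∈ B, ‖g x‖ ^ (2 * (m:ℝ))) ^ (1/(2 * (m:ℝ))) := by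
    have h1 : ∀ x : G, |‖f x‖| = ‖f x‖ :=
      fun x => abs_of_nonneg (norm_nonneg _)
    have h2 : ∀ x : G, |‖g x‖| = ‖g x‖ :=
      fun x => abs_of_nonneg (norm_nonneg _)
    have := Real.inner_le_Lp_mul_Lq B (fun x => ‖f x‖)
      (fun x => ‖g x‖) hpq
    simpa only [h1, h2] using this
  have hBf : (∑ x ∈ B, ‖f x‖ ^ p') ^ (1/p') ≤ Lp := by
    have hexp : 1/p' = (2 * (m:ℝ) - 1) / (2 * (m:ℝ)) := by
      rw [hp', one_div_div]
    rw [hexp, hLp]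
    refine Real.rpow_le_rpow (Finset.sum_nonneg fun x _ =>
      Real.rpow_nonneg (norm_nonneg _) _) ?_ (by positivity)
    rw [hSp]
    exact Finset.sum_le_sum_of_subset_of_nonneg (Finset.subset_univ B)
      fun x _ _ => Real.rpow_nonneg (norm_nonneg _) _
  -- expansion of |g|^(2m)
  have expand : ∀ x : G, ((‖g x‖ ^ (2 * m) : ℝ) : ℂ) =
      ∑ v : Fin m → AddChar G ℂ, ∑ w : Fin m → AddChar G ℂ,
        ((∏ i, a (v i)) * (∏ i, (starRingEnd ℂ) (a (w i)))) *
          ((∏ i, v i) / (∏ i, w i)) x := by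
    intro x
    have h1 : ((‖g x‖ ^ (2 * m) : ℝ) : ℂ)
        = g x ^ m * ((starRingEnd ℂ) (g x)) ^ m := by
      rw [← mul_pow, Complex.mul_conj, Complex.normSq_eq_norm_sq, ← Complex.ofReal_pow, ← pow_mul]
    have h2 : (starRingEnd ℂ) (g x) = ∑ γ, (starRingEnd ℂ) (a γ) * (starRingEnd ℂ) (γ x) := by
      simp only [hg, map_sum, map_mul]
    rw [h1, h2]
    have h3 : g x = ∑ γ, a γ * γ x := rfl
    rw [h3, Fintype.sum_pow, Fintype.sum_pow, Finset.sum_mul_sum]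
    refine Finset.sum_congr rfl fun v _ => Finset.sum_congr rfl fun w _ => ?_
    exact prod_char_eq (fun i => a (v i)) (fun i => (starRingEnd ℂ) (a (w i))) v w x
  have Tnn : (0:ℝ) ≤ ∑ x ∈ B, ‖g x‖ ^ (2 * m) :=
    Finset.sum_nonneg fun x _ => pow_nonneg (norm_nonneg _) _
  have Texpand : ((∑ x ∈ B, ‖g x‖ ^ (2 * m) : ℝ) : ℂ) =
      ∑ v : Fin m → AddChar G ℂ, ∑ w : Fin m → AddChar G ℂ,
        ((∏ i, a (v i)) * (∏ i, (starRingEnd ℂ) (a (w i)))) *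
          ∑ x ∈ B, ((∏ i, v i) / (∏ i, w i)) x := by
    rw [Complex.ofReal_sum]
    rw [Finset.sum_congr rfl fun x _ => expand x]
    rw [Finset.sum_comm]
    refine Finset.sum_congr rfl fun v _ => ?_
    rw [Finset.sum_comm]
    refine Finset.sum_congr rfl fun w _ => ?_
    rw [← Finset.mul_sum]
  have hSbound : ∀ q : AddChar G ℂ,
      ‖∑ x ∈ B, q x‖ ≤ (B.card : ℝ) * ((specSet B ε).indicator 1 q + ε) := by
    intro q
    by_cases hq : q ∈ specSet B ε
    · rw [Set.indicator_of_mem hq, Pi.one_apply]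
      have h2 : ∑ x ∈ B, ‖q x‖ = (B.card : ℝ) := by
        have h1 : ∀ x ∈ B, ‖q x‖ = 1 := fun x _ => by
          exact AddChar.norm_apply q x
        rw [Finset.sum_congr rfl h1, Finset.sum_const, nsmul_eq_mul, mul_one]
      calc ‖∑ x ∈ B, q x‖ ≤ ∑ x ∈ B, ‖q x‖ := norm_sum_le _ _
        _ = (B.card : ℝ) := h2
        _ ≤ (B.card : ℝ) * (1 + ε) := by nlinarith
    · rw [Set.indicator_of_notMem hq]
      have h3 : ¬ (ε * B.card ≤ ‖∑ x ∈ B, q x‖) := hq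
      push_neg at h3
      calc ‖∑ x ∈ B, q x‖ ≤ ε * B.card := le_of_lt h3
        _ = (B.card : ℝ) * (0 + ε) := by ring
  have step4 : ∑ x ∈ B, ‖g x‖ ^ (2 * m) ≤
      (B.card : ℝ) * (energy ω (specSet B ε) m + ε * W ^ (2 * m)) := by
    have hWsum : (∑ v : Fin m → AddChar G ℂ, ∑ w : Fin m → AddChar G ℂ,
        (∏ i, ω (v i)) * (∏ i, ω (w i))) = W ^ (2 * m) := by
      rw [← Finset.sum_mul_sum, ← Fintype.sum_pow, ← pow_add, two_mul]
    have hup : ‖(↑(∑ x ∈ B, ‖g x‖ ^ (2 * m)) : ℂ)‖ ≤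
        ∑ v : Fin m → AddChar G ℂ, ∑ w : Fin m → AddChar G ℂ,
          (∏ i, ω (v i)) * (∏ i, ω (w i)) *
            ((B.card : ℝ) * ((specSet B ε).indicator 1 ((∏ i, v i) / (∏ i, w i)) + ε)) := by
      rw [Texpand]
      refine (norm_sum_le _ _).trans (Finset.sum_le_sum fun v _ =>
        (norm_sum_le _ _).trans (Finset.sum_le_sum fun w _ => ?_))
      rw [norm_mul, norm_mul]
      refine mul_le_mul ?_ (hSbound _) (norm_nonneg _)
        (mul_nonneg (Finset.prod_nonneg fun i _ => hω0 _)
          (Finset.prod_nonneg fun i _ => hω0 _))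
      refine mul_le_mul ?_ ?_ (norm_nonneg _) (Finset.prod_nonneg fun i _ => hω0 _)
      · rw [norm_prod]
        exact Finset.prod_le_prod (fun i _ => norm_nonneg _) (fun i _ => haabs _)
      · rw [norm_prod]
        refine Finset.prod_le_prod (fun i _ => norm_nonneg _) (fun i _ => ?_)
        rw [Complex.norm_conj]
        exact haabs _
    have habs : ∑ x ∈ B, ‖g x‖ ^ (2 * m)
        = ‖(↑(∑ x ∈ B, ‖g x‖ ^ (2 * m)) : ℂ)‖ := by
      rw [Complex.norm_real, Real.norm_eq_abs, abs_of_nonneg Tnn]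
    rw [habs]
    refine hup.trans (le_of_eq ?_)
    have e : ∀ v w : Fin m → AddChar G ℂ,
        (∏ i, ω (v i)) * (∏ i, ω (w i)) *
            ((B.card : ℝ) * ((specSet B ε).indicator 1 ((∏ i, v i) / (∏ i, w i)) + ε))
          = (B.card : ℝ) * ((∏ i, ω (v i)) * (∏ i, ω (w i)) *
              (specSet B ε).indicator 1 ((∏ i, v i) / (∏ i, w i)))
            + ((B.card : ℝ) * ε) * ((∏ i, ω (v i)) * (∏ i, ω (w i))) := fun v w => by ring
    have lhs_eq : ∑ v : Fin m → AddChar G ℂ, ∑ w : Fin m → AddChar G ℂ,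
          (∏ i, ω (v i)) * (∏ i, ω (w i)) *
            ((B.card : ℝ) * ((specSet B ε).indicator 1 ((∏ i, v i) / (∏ i, w i)) + ε))
        = (B.card : ℝ) * (∑ v : Fin m → AddChar G ℂ, ∑ w : Fin m → AddChar G ℂ,
              (∏ i, ω (v i)) * (∏ i, ω (w i)) *
                (specSet B ε).indicator 1 ((∏ i, v i) / (∏ i, w i)))
          + ((B.card : ℝ) * ε) * (∑ v : Fin m → AddChar G ℂ, ∑ w : Fin m → AddChar G ℂ,
              (∏ i, ω (v i)) * (∏ i, ω (w i))) := by
      rw [Finset.mul_sum, Finset.mul_sum, ← Finset.sum_add_distrib]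
      refine Finset.sum_congr rfl fun v _ => ?_
      rw [Finset.mul_sum, Finset.mul_sum, ← Finset.sum_add_distrib]
      refine Finset.sum_congr rfl fun w _ => ?_
      ring
    rw [lhs_eq, hWsum]
    simp only [energy]
    ring
  have hGb : (∑ x ∈ B, ‖g x‖ ^ (2 * (m:ℝ))) ^ (1/(2 * (m:ℝ))) ≤
      ((B.card : ℝ) * (energy ω (specSet B ε) m + ε * W ^ (2 * m))) ^ (1/(2 * (m:ℝ))) := by
    have hcast : ∀ x : G, ‖g x‖ ^ (2 * (m:ℝ)) = ‖g x‖ ^ (2 * m) := by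
      intro x
      rw [← Real.rpow_natCast (‖g x‖) (2 * m)]
      congr 1
      push_cast
      ring
    refine Real.rpow_le_rpow ?_ ?_ (by positivity)
    · exact Finset.sum_nonneg fun x _ => Real.rpow_nonneg (norm_nonneg _) _
    · rw [Finset.sum_congr rfl fun x _ => hcast x]
      exact step4
  have chain : η * L1 * W ≤
      Lp * ((B.card : ℝ) * (energy ω (specSet B ε) m + ε * W ^ (2 * m))) ^ (1/(2 * (m:ℝ))) := by
    calc η * L1 * W ≤ σ := step1
      _ ≤ ∑ x, ‖f x‖ * ‖g x‖ := step2
      _ = ∑ x ∈ B, ‖f x‖ * ‖g x‖ := step3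
      _ ≤ (∑ x ∈ B, ‖f x‖ ^ p') ^ (1/p') *
            (∑ x ∈ B, ‖g x‖ ^ (2 * (m:ℝ))) ^ (1/(2 * (m:ℝ))) := holder
      _ ≤ _ := mul_le_mul hBf hGb
            (Real.rpow_nonneg (Finset.sum_nonneg fun x _ =>
              Real.rpow_nonneg (norm_nonneg _) _) _) (le_of_lt hLppos)
  have hRnn : (0:ℝ) ≤ (B.card : ℝ) * (energy ω (specSet B ε) m + ε * W ^ (2 * m)) :=
    mul_nonneg (le_of_lt hBc) (add_nonneg hE (mul_nonneg hε0 (pow_nonneg hWnn _)))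
  have hfinal := pow_le_pow_left₀
    (mul_nonneg (mul_nonneg hη0 (le_of_lt hL1pos)) hWnn) chain (2 * m)
  rw [mul_pow (η * L1) W, mul_pow Lp _] at hfinal
  have hexp1 : (1/(2 * (m:ℝ))) * ((2 * m : ℕ) : ℝ) = 1 := by
    push_cast
    field_simp
  have hRpow : (((B.card : ℝ) * (energy ω (specSet B ε) m + ε * W ^ (2 * m)))
        ^ (1/(2 * (m:ℝ)))) ^ (2 * m)
      = (B.card : ℝ) * (energy ω (specSet B ε) m + ε * W ^ (2 * m)) := by
    rw [← Real.rpow_natCast (_ ^ (1/(2 * (m:ℝ)))) (2 * m), ← Real.rpow_mul hRnn, hexp1,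
      Real.rpow_one]
  rw [hRpow] at hfinal
  set D : ℝ := Lp * (B.card : ℝ) ^ ((1:ℝ)/(2 * (m:ℝ))) with hD
  have hDpos : 0 < D := mul_pos hLppos (Real.rpow_pos_of_pos hBc _)
  have hDpow : D ^ (2 * m) = Lp ^ (2 * m) * (B.card : ℝ) := by
    rw [hD, mul_pow, ← Real.rpow_natCast ((B.card:ℝ) ^ ((1:ℝ)/(2 * (m:ℝ)))) (2 * m),
      ← Real.rpow_mul (le_of_lt hBc)]
    rw [show ((1:ℝ)/(2 * (m:ℝ))) * ((2 * m : ℕ) : ℝ) = 1 from hexp1, Real.rpow_one]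
  rw [div_pow, mul_sub, sub_le_iff_le_add, ← mul_div_assoc,
    div_le_iff₀ (by positivity)]
  have h5 : (η * L1) ^ (2 * m) * W ^ (2 * m) ≤
      D ^ (2 * m) * (energy ω (specSet B ε) m + ε * W ^ (2 * m)) := by
    calc (η * L1) ^ (2 * m) * W ^ (2 * m)
        ≤ Lp ^ (2 * m) * ((B.card : ℝ) *
            (energy ω (specSet B ε) m + ε * W ^ (2 * m))) := hfinal
      _ = D ^ (2 * m) * (energy ω (specSet B ε) m + ε * W ^ (2 * m)) := by
          rw [hDpow]; ring
  calc W ^ (2 * m) * (η * L1) ^ (2 * m)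
      = (η * L1) ^ (2 * m) * W ^ (2 * m) := by ring
    _ ≤ D ^ (2 * m) * (energy ω (specSet B ε) m + ε * W ^ (2 * m)) := h5
    _ = (energy ω (specSet B ε) m + W ^ (2 * m) * ε) * D ^ (2 * m) := by ring
end

section
/- Let G be a finite abelian group with dual Ĝ, let Γ ⊆ Ĝ, let d ≥ 1 be an integer, and suppose Δ ⊆ Ĝ is d-covered by Γ. Then there is Λ ⊆ Ĝ of size at most d such that: for every B ⊆ G which has (4d)^{−1}-control of Λ and (1/8)-control of Γ, one has |B̂(γ)| ≥ |B|/2 for every γ ∈ Δ. -/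
open scoped BigOperators Pointwise

private lemma abs_arcsin_eq (y : ℝ) : |Real.arcsin y| = Real.arcsin |y| := by
  rcases le_or_gt 0 y with h | h
  · rw [abs_of_nonneg h, abs_of_nonneg (Real.arcsin_nonneg.2 h)]
  · rw [abs_of_neg h, abs_of_neg (Real.arcsin_lt_zero.2 h), ← Real.arcsin_neg]

private lemma arcsin_le_div_sqrt {x : ℝ} (h0 : 0 ≤ x) (h1 : x < 1) :
    Real.arcsin x ≤ x / Real.sqrt (1 - x ^ 2) := by
  rcases eq_or_lt_of_le h0 with h | h
  · simp [← h]
  · have h2 : Real.arcsin x < Real.pi / 2 := Real.arcsin_lt_pi_div_two.2 h1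
    have h3 : 0 < Real.arcsin x := Real.arcsin_pos.2 h
    have := Real.lt_tan h3 h2
    rw [Real.tan_arcsin] at this
    exact this.le

private lemma disk_log {a : ℂ} {δ : ℝ} (h0 : 0 ≤ δ) (h1 : δ < 1)
    (h : ‖1 - a‖ ≤ δ) :
    a ≠ 0 ∧ |(Complex.log a).re| ≤ Real.log (1 - δ)⁻¹ ∧
      |(Complex.log a).im| ≤ Real.arcsin δ := by
  have habs_lb : 1 - δ ≤ ‖a‖ := by
    have := norm_sub_norm_le (1:ℂ) a
    simp only [norm_one] at this
    linarith
  have habs_ub : ‖a‖ ≤ 1 + δ := by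
    have h' := norm_sub_norm_le a 1
    rw [norm_one, norm_sub_rev] at h'
    linarith
  have hpos : (0:ℝ) < ‖a‖ := by linarith
  have ha0 : a ≠ 0 := by
    intro h'; rw [h'] at hpos; simp at hpos
  refine ⟨ha0, ?_, ?_⟩
  · rw [Complex.log_re, abs_le]
    constructor
    · rw [Real.log_inv, neg_neg]
      exact Real.log_le_log (by linarith) habs_lb
    · have hle : ‖a‖ ≤ (1 - δ)⁻¹ := by
        rw [inv_eq_one_div, le_div_iff₀ (by linarith)]
        nlinarith
      exact Real.log_le_log hpos hle
  · rw [Complex.log_im]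
    -- real part of a is ≥ 1 - δ > 0
    have hre : |1 - a.re| ≤ δ := by
      have := Complex.abs_re_le_norm (1 - a)
      simpa using this.trans h
    have hre' : 0 < a.re := by
      rcases abs_le.1 hre with ⟨hA, hB⟩; linarith
    have harg : |Complex.arg a| ≤ Real.pi / 2 :=
      Complex.abs_arg_le_pi_div_two_iff.2 hre'.le
    -- |im a| ≤ δ * |a|
    have hsq : (1 - a.re) ^ 2 + a.im ^ 2 ≤ δ ^ 2 := by
      have h2 : ‖1 - a‖ ^ 2 ≤ δ ^ 2 := by
        apply pow_le_pow_left₀ (norm_nonneg _) h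
      rw [Complex.sq_norm, Complex.normSq_apply] at h2
      simp only [Complex.sub_re, Complex.sub_im, Complex.one_re, Complex.one_im] at h2
      nlinarith
    have him : |a.im| ≤ δ * ‖a‖ := by
      have key : a.im ^ 2 ≤ (δ * ‖a‖) ^ 2 := by
        have hA : ‖a‖ ^ 2 = a.re ^ 2 + a.im ^ 2 := by
          rw [Complex.sq_norm, Complex.normSq_apply]; ring
        nlinarith [sq_nonneg (a.re - (1 - δ ^ 2)), sq_nonneg (1 - a.re), sq_nonneg δ,
          sq_nonneg a.im]
      have h2 : |a.im| ^ 2 ≤ (δ * ‖a‖) ^ 2 := by rwa [sq_abs]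
      exact (pow_le_pow_iff_left₀ (abs_nonneg _) (mul_nonneg h0 hpos.le) two_ne_zero).1 h2
    have hsin : |Real.sin (Complex.arg a)| ≤ δ := by
      rw [Complex.sin_arg, abs_div, abs_of_pos hpos, div_le_iff₀ hpos]
      simpa [mul_comm] using him
    have harg_eq : Complex.arg a = Real.arcsin (Real.sin (Complex.arg a)) :=
      (Real.arcsin_sin (by linarith [abs_le.1 harg]) (abs_le.1 harg).2).symm
    calc |Complex.arg a| = Real.arcsin |Real.sin (Complex.arg a)| := by
          conv_lhs => rw [harg_eq]
          rw [abs_arcsin_eq]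
      _ ≤ Real.arcsin δ := Real.monotone_arcsin hsin

set_option maxHeartbeats 1000000 in
private lemma numeric_core {d : ℕ} (hd : 1 ≤ d) {U V : ℝ}
    (hU : |U| ≤ 2 * Real.log (1 - (1/8 : ℝ))⁻¹
        + (d : ℝ) * Real.log (1 - ((4 * d : ℕ) : ℝ)⁻¹)⁻¹)
    (hV : |V| ≤ 2 * Real.arcsin (1/8) + (d : ℝ) * Real.arcsin (((4 * d : ℕ) : ℝ)⁻¹)) :
    (1:ℝ)/2 ≤ Real.exp U * Real.cos V := by
  have hd' : (1:ℝ) ≤ (d:ℝ) := by exact_mod_cast hd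
  have hcast : ((4 * d : ℕ) : ℝ) = 4 * (d:ℝ) := by push_cast; ring
  set q : ℝ := (4 * (d:ℝ))⁻¹ with hqdef
  rw [hcast] at hU hV
  have hq0 : 0 < q := by positivity
  have hq14 : q ≤ 1/4 := by
    rw [hqdef]
    rw [inv_le_comm₀ (by positivity) (by norm_num)]
    linarith
  have hdq : (d:ℝ) * q = 1/4 := by
    rw [hqdef]; field_simp
  have hq1 : q < 1 := by linarith
  -- exponential part
  have hexp : (147/256 : ℝ) ≤ Real.exp U := by
    have hUlow : -(2 * Real.log (1 - (1/8 : ℝ))⁻¹ + (d:ℝ) * Real.log (1 - q)⁻¹) ≤ U := by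
      have := (abs_le.1 hU).1; linarith
    have e1 : Real.exp (-(2 * Real.log (1 - (1/8 : ℝ))⁻¹ + (d:ℝ) * Real.log (1 - q)⁻¹))
        = (7/8 : ℝ) * (7/8) * ((1 - q) ^ d) := by
      rw [neg_add, Real.exp_add, two_mul, neg_add, Real.exp_add]
      rw [Real.exp_neg, Real.exp_neg, Real.exp_nat_mul]
      rw [Real.exp_log (by norm_num : (0:ℝ) < (1 - (1/8:ℝ))⁻¹)]
      rw [Real.exp_log (inv_pos.2 (by linarith) : (0:ℝ) < (1 - q)⁻¹)]
      rw [inv_pow, inv_inv, inv_inv]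
      norm_num
    have e2 : (3/4 : ℝ) ≤ (1 - q) ^ d := by
      have := one_add_mul_le_pow (a := -q) (by linarith) d
      have h' : 1 + (d:ℝ) * (-q) = 3/4 := by
        rw [mul_neg, hdq]; norm_num
      rw [h'] at this
      rw [← sub_eq_add_neg] at this; exact this
    calc (147/256 : ℝ) = (7/8) * (7/8) * (3/4) := by norm_num
      _ ≤ (7/8 : ℝ) * (7/8) * ((1 - q) ^ d) := by nlinarith
      _ = Real.exp (-(2 * Real.log (1 - (1/8 : ℝ))⁻¹ + (d:ℝ) * Real.log (1 - q)⁻¹)) := e1.symm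
      _ ≤ Real.exp U := Real.exp_le_exp.2 hUlow
  -- cosine part
  have a8 : Real.arcsin (1/8) ≤ (63/500:ℝ) := by
    have h1 := arcsin_le_div_sqrt (x := 1/8) (by norm_num) (by norm_num)
    have hs : ((9921/10000:ℝ) : ℝ) ≤ Real.sqrt (1 - (1/8:ℝ)^2) := by
      rw [Real.le_sqrt (by norm_num) (by norm_num)]
      norm_num
    have : (1/8 : ℝ) / Real.sqrt (1 - (1/8:ℝ)^2) ≤ (63/500:ℝ) := by
      rw [div_le_iff₀ (by linarith)]
      nlinarith
    linarith
  have aq : (d:ℝ) * Real.arcsin q ≤ (2583/10000:ℝ) := by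
    have h1 := arcsin_le_div_sqrt (x := q) hq0.le hq1
    have hs : ((968/1000:ℝ) : ℝ) ≤ Real.sqrt (1 - q^2) := by
      rw [Real.le_sqrt (by norm_num) (by nlinarith)]
      nlinarith
    have h2 : (d:ℝ) * (q / Real.sqrt (1 - q^2)) ≤ (2583/10000:ℝ) := by
      rw [mul_div_assoc'] at *
      rw [div_le_iff₀ (by linarith)]
      nlinarith
    have h3 : (d:ℝ) * Real.arcsin q ≤ (d:ℝ) * (q / Real.sqrt (1 - q^2)) := by
      apply mul_le_mul_of_nonneg_left h1 (by linarith)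
    linarith
  have hVb : |V| ≤ (5103/10000:ℝ) := by
    calc |V| ≤ 2 * Real.arcsin (1/8) + (d:ℝ) * Real.arcsin q := hV
      _ ≤ 2 * (63/500:ℝ) + (2583/10000:ℝ) := by linarith
      _ = (5103/10000:ℝ) := by norm_num
  have hcosb : Real.cos ((5103/10000:ℝ) : ℝ) ≤ Real.cos V := by
    have h' := Real.cos_le_cos_of_nonneg_of_le_pi (abs_nonneg V)
      (by linarith [Real.pi_gt_three] : ((5103/10000:ℝ):ℝ) ≤ Real.pi) hVb
    rwa [Real.cos_abs] at h'
  -- numeric bound on cos (5103/10000:ℝ)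
  have hb : ((5103/10000:ℝ) : ℝ) = 2 * ((5103/20000:ℝ) : ℝ) := by norm_num
  have hsin_t : Real.sin ((5103/20000:ℝ) : ℝ) ≤ (2526023/10000000:ℝ) := by
    have hbnd := Real.sin_bound (x := ((5103/20000:ℝ) : ℝ)) (by rw [abs_of_pos] <;> norm_num)
    rw [abs_of_pos (by norm_num : (0:ℝ) < (5103/20000:ℝ))] at hbnd
    have := (abs_le.1 hbnd).2
    norm_num at this ⊢
    linarith
  have hsin_nonneg : 0 ≤ Real.sin ((5103/20000:ℝ) : ℝ) :=
    Real.sin_nonneg_of_nonneg_of_le_pi (by norm_num) (by linarith [Real.pi_gt_three])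
  have hcos_num : ((8723/10000:ℝ) : ℝ) ≤ Real.cos ((5103/10000:ℝ) : ℝ) := by
    rw [hb, Real.cos_two_mul, Real.cos_sq']
    nlinarith
  have hcosV : ((8723/10000:ℝ) : ℝ) ≤ Real.cos V := by linarith
  calc (1/2 : ℝ) ≤ (147/256) * (8723/10000:ℝ) := by norm_num
    _ ≤ Real.exp U * Real.cos V := by
        apply mul_le_mul hexp hcosV (by norm_num) (Real.exp_pos U).le

private def evalHom {G : Type*} [AddCommGroup G] (x : G) : AddChar G ℂ →* ℂ where
  toFun ψ := ψ x
  map_one' := AddChar.one_apply x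
  map_mul' ψ φ := AddChar.mul_apply ψ φ x

set_option maxHeartbeats 1000000 in
private lemma point_bound {G : Type*} [AddCommGroup G] {d : ℕ} (hd : 1 ≤ d)
    (Λ : Finset (AddChar G ℂ)) (hΛcard : Λ.card ≤ d)
    (ε : AddChar G ℂ → ℤ) (hε : ∀ lam, ε lam = -1 ∨ ε lam = 0 ∨ ε lam = 1)
    (g₁ g₂ : AddChar G ℂ) (x : G)
    (h1 : ‖1 - g₁ x‖ ≤ 1/8) (h2 : ‖1 - g₂ x‖ ≤ 1/8)
    (hl : ∀ lam ∈ Λ, ‖1 - lam x‖ ≤ ((4 * d : ℕ) : ℝ)⁻¹) :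
    (1:ℝ)/2 ≤ ((g₁ * g₂⁻¹ * ∏ lam ∈ Λ, lam ^ ε lam) x).re := by
  set q : ℝ := ((4 * d : ℕ) : ℝ)⁻¹ with hqdef
  have hcast : ((4 * d : ℕ) : ℝ) = 4 * (d:ℝ) := by push_cast; ring
  have hd' : (1:ℝ) ≤ (d:ℝ) := by exact_mod_cast hd
  have hq0 : 0 ≤ q := by rw [hqdef]; positivity
  have hq1 : q < 1 := by
    rw [hqdef, hcast]
    rw [inv_lt_one_iff₀]
    right; linarith
  set L8 : ℝ := Real.log (1 - (1/8 : ℝ))⁻¹ with hL8def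
  set Lq : ℝ := Real.log (1 - q)⁻¹ with hLqdef
  have hLq0 : 0 ≤ Lq := by
    rw [hLqdef]
    apply Real.log_nonneg
    rw [le_inv_comm₀ (by norm_num) (by linarith)]
    linarith
  have haq0 : 0 ≤ Real.arcsin q := Real.arcsin_nonneg.2 hq0
  obtain ⟨hg₁0, hg₁re, hg₁im⟩ := disk_log (by norm_num) (by norm_num) h1
  obtain ⟨hg₂0, hg₂re, hg₂im⟩ := disk_log (by norm_num) (by norm_num) h2
  set w : AddChar G ℂ → ℂ := fun lam => (ε lam : ℂ) * Complex.log (lam x) with hwdef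
  have hw : ∀ lam ∈ Λ, (lam ^ ε lam) x = Complex.exp (w lam) ∧
      |(w lam).re| ≤ Lq ∧ |(w lam).im| ≤ Real.arcsin q := by
    intro lam hlam
    obtain ⟨hl0, hlre, hlim⟩ := disk_log hq0 hq1 (hl lam hlam)
    rcases hε lam with he | he | he
    · have hwl : w lam = -Complex.log (lam x) := by
        rw [hwdef]; simp only [he]; push_cast; ring
      refine ⟨?_, ?_, ?_⟩
      · rw [hwl, AddChar.zpow_apply, he, Complex.exp_neg, Complex.exp_log hl0,
          zpow_neg_one]
      · rw [hwl, Complex.neg_re, abs_neg]; exact hlre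
      · rw [hwl, Complex.neg_im, abs_neg]; exact hlim
    · have hwl : w lam = 0 := by
        rw [hwdef]; simp only [he]; push_cast; ring
      refine ⟨?_, ?_, ?_⟩
      · rw [hwl, AddChar.zpow_apply, he, zpow_zero, Complex.exp_zero]
      · rw [hwl]; simpa using hLq0
      · rw [hwl]; simpa using haq0
    · have hwl : w lam = Complex.log (lam x) := by
        rw [hwdef]; simp only [he]; push_cast; ring
      refine ⟨?_, ?_, ?_⟩
      · rw [hwl, AddChar.zpow_apply, he, zpow_one, Complex.exp_log hl0]
      · rw [hwl]; exact hlre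
      · rw [hwl]; exact hlim
  set W : ℂ := Complex.log (g₁ x) + (-Complex.log (g₂ x)) + ∑ lam ∈ Λ, w lam with hWdef
  have heval : (g₁ * g₂⁻¹ * ∏ lam ∈ Λ, lam ^ ε lam) x = Complex.exp W := by
    have hprod : (∏ lam ∈ Λ, lam ^ ε lam) x = ∏ lam ∈ Λ, (lam ^ ε lam) x :=
      map_prod (evalHom x) (fun lam => lam ^ ε lam) Λ
    rw [AddChar.mul_apply, AddChar.mul_apply, AddChar.inv_apply', hprod]
    rw [Finset.prod_congr rfl (fun lam hlam => (hw lam hlam).1)]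
    rw [← Complex.exp_sum]
    rw [hWdef, Complex.exp_add, Complex.exp_add]
    rw [Complex.exp_log hg₁0, Complex.exp_neg, Complex.exp_log hg₂0]
  have hsumre : |(∑ lam ∈ Λ, w lam).re| ≤ (d:ℝ) * Lq := by
    rw [Complex.re_sum]
    calc |∑ lam ∈ Λ, (w lam).re| ≤ ∑ lam ∈ Λ, |(w lam).re| :=
          Finset.abs_sum_le_sum_abs _ _
      _ ≤ Λ.card • Lq := Finset.sum_le_card_nsmul Λ _ Lq
          (fun lam hlam => (hw lam hlam).2.1)
      _ = (Λ.card : ℝ) * Lq := nsmul_eq_mul _ _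
      _ ≤ (d:ℝ) * Lq := by
          apply mul_le_mul_of_nonneg_right _ hLq0
          exact_mod_cast hΛcard
  have hsumim : |(∑ lam ∈ Λ, w lam).im| ≤ (d:ℝ) * Real.arcsin q := by
    rw [Complex.im_sum]
    calc |∑ lam ∈ Λ, (w lam).im| ≤ ∑ lam ∈ Λ, |(w lam).im| :=
          Finset.abs_sum_le_sum_abs _ _
      _ ≤ Λ.card • Real.arcsin q := Finset.sum_le_card_nsmul Λ _ _
          (fun lam hlam => (hw lam hlam).2.2)
      _ = (Λ.card : ℝ) * Real.arcsin q := nsmul_eq_mul _ _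
      _ ≤ (d:ℝ) * Real.arcsin q := by
          apply mul_le_mul_of_nonneg_right _ haq0
          exact_mod_cast hΛcard
  have hWre : |W.re| ≤ 2 * L8 + (d:ℝ) * Lq := by
    rw [hWdef]
    simp only [Complex.add_re, Complex.neg_re]
    calc |(Complex.log (g₁ x)).re + -(Complex.log (g₂ x)).re + (∑ lam ∈ Λ, w lam).re|
        ≤ |(Complex.log (g₁ x)).re| + |(Complex.log (g₂ x)).re|
          + |(∑ lam ∈ Λ, w lam).re| := by
          have := abs_add_le ((Complex.log (g₁ x)).re + -(Complex.log (g₂ x)).re)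
            ((∑ lam ∈ Λ, w lam).re)
          have h2 := abs_add_le ((Complex.log (g₁ x)).re) (-(Complex.log (g₂ x)).re)
          rw [abs_neg] at h2
          linarith
      _ ≤ 2 * L8 + (d:ℝ) * Lq := by
          rw [hL8def]
          linarith
  have hWim : |W.im| ≤ 2 * Real.arcsin (1/8) + (d:ℝ) * Real.arcsin q := by
    rw [hWdef]
    simp only [Complex.add_im, Complex.neg_im]
    calc |(Complex.log (g₁ x)).im + -(Complex.log (g₂ x)).im + (∑ lam ∈ Λ, w lam).im|
        ≤ |(Complex.log (g₁ x)).im| + |(Complex.log (g₂ x)).im|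
          + |(∑ lam ∈ Λ, w lam).im| := by
          have := abs_add_le ((Complex.log (g₁ x)).im + -(Complex.log (g₂ x)).im)
            ((∑ lam ∈ Λ, w lam).im)
          have h2 := abs_add_le ((Complex.log (g₁ x)).im) (-(Complex.log (g₂ x)).im)
          rw [abs_neg] at h2
          linarith
      _ ≤ 2 * Real.arcsin (1/8) + (d:ℝ) * Real.arcsin q := by linarith
  rw [heval, Complex.exp_re]
  exact numeric_core hd hWre hWim

/-- `⟨Λ⟩ = {∑_{λ∈Λ} ε_λ λ : ε_λ ∈ {−1,0,1}}` in the dual group, written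
multiplicatively. -/
def spanPM {G : Type*} [AddCommGroup G] (Λ : Finset (AddChar G ℂ)) :
    Set (AddChar G ℂ) :=
  {γ | ∃ ε : AddChar G ℂ → ℤ, (∀ lam, ε lam = -1 ∨ ε lam = 0 ∨ ε lam = 1) ∧
    γ = ∏ lam ∈ Λ, lam ^ ε lam}

/-- **Control on a covering set gives control on the whole covered set.** If `Δ` is
`d`-covered by `Γ`, there is `Λ` of size at most `d` such that any `B` having
`(4d)⁻¹`-control of `Λ` and `1/8`-control of `Γ` satisfies `|B̂(γ)| ≥ |B|/2` for every
`γ ∈ Δ`. -/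
theorem control_of_covered {G : Type*} [AddCommGroup G]
    (Γ Δ : Set (AddChar G ℂ)) (d : ℕ) (hd : 1 ≤ d)
    (hcov : ∃ Λ : Finset (AddChar G ℂ), Λ.card ≤ d ∧ Δ ⊆ Γ * Γ⁻¹ * spanPM Λ) :
    ∃ Λ : Finset (AddChar G ℂ), Λ.card ≤ d ∧
      ∀ B : Finset G,
        (∀ x ∈ B, ∀ γ ∈ Λ, ‖1 - γ x‖ ≤ ((4 * d : ℕ) : ℝ)⁻¹) →
        (∀ x ∈ B, ∀ γ ∈ Γ, ‖1 - γ x‖ ≤ 1 / 8) →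
        ∀ γ ∈ Δ, (B.card : ℝ) / 2 ≤ ‖∑ x ∈ B, γ x‖ := by

  obtain ⟨Λ, hΛcard, hΛ⟩ := hcov
  refine ⟨Λ, hΛcard, ?_⟩
  intro B hBΛ hBΓ γ hγ
  obtain ⟨s, hs, p, hp, rfl⟩ := hΛ hγ
  obtain ⟨g₁, hg₁, g₂', hg₂', rfl⟩ := hs
  obtain ⟨ε, hε, rfl⟩ := hp
  have hg₂ : g₂'⁻¹ ∈ Γ := hg₂'
  have hpoint : ∀ x ∈ B,
      (1:ℝ)/2 ≤ ((g₁ * g₂' * ∏ lam ∈ Λ, lam ^ ε lam) x).re := by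
    intro x hx
    have h := point_bound hd Λ hΛcard ε hε g₁ g₂'⁻¹ x
      (hBΓ x hx g₁ hg₁) (hBΓ x hx g₂'⁻¹ hg₂)
      (fun lam hlam => hBΛ x hx lam hlam)
    rwa [inv_inv] at h
  calc (B.card : ℝ) / 2
      ≤ ∑ x ∈ B, ((g₁ * g₂' * ∏ lam ∈ Λ, lam ^ ε lam) x).re := by
        have := Finset.card_nsmul_le_sum B
          (fun x => ((g₁ * g₂' * ∏ lam ∈ Λ, lam ^ ε lam) x).re) ((1:ℝ)/2) hpoint
        rw [nsmul_eq_mul] at this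
        linarith
    _ = (∑ x ∈ B, (g₁ * g₂' * ∏ lam ∈ Λ, lam ^ ε lam) x).re :=
        (Complex.re_sum _ _).symm
    _ ≤ ‖∑ x ∈ B, (g₁ * g₂' * ∏ lam ∈ Λ, lam ^ ε lam) x‖ :=
        Complex.re_le_norm _
end
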